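/- Let y > 0. The cubic polynomial in z given by 1 - 3y + 3y² - y³ + (3y + 21y² + 3y³)z + (3y² - 3y³)z² + y³ z³ has exactly one real root, namely z = (y^{1/3} - 1)³ / y; its other two roots form the complex conjugate pair z = (3y^{2/3} - 3y^{1/3} + 2y - 2)/(2y) ± i·3√3(y^{1/3}+1)/(2y^{2/3}), which have nonzero imaginary part. -/

import Mathlib

/-- The discriminant cubic has exactly one real root z = (y^{1/3}-1)³/y and a pair of
complex conjugate roots with nonzero imaginary part. -/
theorem stmt9 (y : ℝ) (hy : 0 < y) :
    ∃ im2 : ℝ, im2 = 3 * Real.sqrt 3 * (y ^ ((1 : ℝ) / 3) + 1) / (2 * y ^ ((2 : ℝ) / 3)) ∧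
      im2 ≠ 0 ∧
      ∀ z : ℂ,
        ((1 - 3 * y + 3 * y ^ 2 - y ^ 3 : ℝ) : ℂ)
            + ((3 * y + 21 * y ^ 2 + 3 * y ^ 3 : ℝ) : ℂ) * z
            + ((3 * y ^ 2 - 3 * y ^ 3 : ℝ) : ℂ) * z ^ 2 + ((y ^ 3 : ℝ) : ℂ) * z ^ 3 = 0 ↔
          z = (((y ^ ((1 : ℝ) / 3) - 1) ^ 3 / y : ℝ) : ℂ) ∨
          z = (((3 * y ^ ((2 : ℝ) / 3) - 3 * y ^ ((1 : ℝ) / 3) + 2 * y - 2) / (2 * y) : ℝ) : ℂ)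
              + Complex.I * (im2 : ℂ) ∨
          z = (((3 * y ^ ((2 : ℝ) / 3) - 3 * y ^ ((1 : ℝ) / 3) + 2 * y - 2) / (2 * y) : ℝ) : ℂ)
              - Complex.I * (im2 : ℂ) := by
  set c : ℝ := y ^ ((1 : ℝ) / 3) with hcdef
  have hc : 0 < c := Real.rpow_pos_of_pos hy _
  have hc0 : c ≠ 0 := hc.ne'
  have hc3 : c ^ 3 = y := by
    rw [hcdef, ← Real.rpow_natCast (y ^ ((1:ℝ)/3)) 3, ← Real.rpow_mul hy.le]
    norm_num
  have h23 : y ^ ((2 : ℝ) / 3) = c ^ 2 := by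
    rw [hcdef, ← Real.rpow_natCast (y ^ ((1:ℝ)/3)) 2, ← Real.rpow_mul hy.le]
    norm_num
  set m : ℝ := 3 * Real.sqrt 3 * (c + 1) / (2 * c ^ 2) with hmdef
  refine ⟨m, by rw [hmdef, h23], ?_, ?_⟩
  · have hs : (0:ℝ) < Real.sqrt 3 := Real.sqrt_pos.2 (by norm_num)
    have hm : 0 < m := by positivity
    exact hm.ne'
  · have hmsq : m ^ 2 = 27 * (c + 1) ^ 2 / (4 * c ^ 4) := by
      rw [hmdef, div_pow, mul_pow, mul_pow, Real.sq_sqrt (by norm_num : (3:ℝ) ≥ 0)]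
      ring
    intro z
    set a : ℝ := (c - 1) ^ 3 / y with hadef
    set re : ℝ := (3 * y ^ ((2:ℝ)/3) - 3 * c + 2 * y - 2) / (2 * y) with hredef
    have hcc : (c : ℂ) ≠ 0 := by exact_mod_cast hc0
    -- cleared-denominator facts
    have e1 : (c : ℂ) ^ 3 * (z - (a : ℂ)) = (c : ℂ) ^ 3 * z - ((c : ℂ) - 1) ^ 3 := by
      rw [hadef, ← hc3]; push_cast; field_simp
    have e2 : 2 * (c : ℂ) ^ 3 * (z - (re : ℂ)) =
        2 * (c : ℂ) ^ 3 * z - (3 * (c:ℂ) ^ 2 - 3 * (c:ℂ) + 2 * (c:ℂ) ^ 3 - 2) := by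
      rw [hredef, h23, ← hc3]; push_cast; field_simp
    have e3 : 4 * (c : ℂ) ^ 4 * (m : ℂ) ^ 2 = 27 * ((c:ℂ) + 1) ^ 2 := by
      have := congrArg (fun x : ℝ => (x : ℂ)) hmsq
      push_cast at this
      rw [this]; field_simp
    have key :
        ((1 - 3 * y + 3 * y ^ 2 - y ^ 3 : ℝ) : ℂ)
            + ((3 * y + 21 * y ^ 2 + 3 * y ^ 3 : ℝ) : ℂ) * z
            + ((3 * y ^ 2 - 3 * y ^ 3 : ℝ) : ℂ) * z ^ 2 + ((y ^ 3 : ℝ) : ℂ) * z ^ 3 =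
          ((c : ℂ) ^ 3) ^ 3 * (z - (a : ℂ)) * ((z - (re : ℂ)) ^ 2 + (m : ℂ) ^ 2) := by
      have h4 : (4 : ℂ) * (c : ℂ) ^ 9 ≠ 0 := by
        intro h
        rcases mul_eq_zero.1 h with h | h
        · norm_num at h
        · exact hcc (pow_eq_zero_iff (by norm_num) |>.1 h)
      apply mul_left_cancel₀ h4
      have hrhs : (4 : ℂ) * (c : ℂ) ^ 9 *
          (((c : ℂ) ^ 3) ^ 3 * (z - (a : ℂ)) * ((z - (re : ℂ)) ^ 2 + (m : ℂ) ^ 2)) =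
          (c : ℂ) ^ 9 * ((c : ℂ) ^ 3 * (z - (a : ℂ))) *
            ((2 * (c : ℂ) ^ 3 * (z - (re : ℂ))) ^ 2 +
              (c : ℂ) ^ 2 * (4 * (c : ℂ) ^ 4 * (m : ℂ) ^ 2)) := by ring
      rw [hrhs, e1, e2, e3, ← hc3]
      push_cast
      ring
    have hfac : (z - (re : ℂ)) ^ 2 + (m : ℂ) ^ 2 =
        (z - ((re : ℂ) + Complex.I * m)) * (z - ((re : ℂ) - Complex.I * m)) := by
      linear_combination ((m:ℂ)^2) * Complex.I_sq
    have hC : ((c : ℂ) ^ 3) ^ 3 ≠ 0 := by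
      exact pow_ne_zero _ (pow_ne_zero _ hcc)
    rw [key, hfac]
    constructor
    · intro h
      rcases mul_eq_zero.1 h with h | h
      · rcases mul_eq_zero.1 h with h | h
        · exact absurd h hC
        · exact Or.inl (sub_eq_zero.1 h)
      · rcases mul_eq_zero.1 h with h | h
        · exact Or.inr (Or.inl (sub_eq_zero.1 h))
        · exact Or.inr (Or.inr (sub_eq_zero.1 h))
    · rintro (h | h | h) <;> rw [h] <;> ring
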